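/- Let (C,V) be an election. Suppose there exist candidates b,c ∈ C such that (1) every voter prefers b over c, (2) no voter ranks any candidate strictly between b and c, and (3) some candidate a satisfies a ≻_v b for every vote v. Then (C,V) is 2-Euclidean if and only if the subelection induced by C \ {b} is 2-Euclidean. -/

import Mathlib

noncomputable section

abbrev Plane : Type := EuclideanSpace ℝ (Fin 2)

/-- An election is 2-Euclidean. -/
def IsEuclidean2 {C V : Type*} (pref : V → C → C → Prop) : Prop :=
  ∃ γ : C ⊕ V → Plane, Function.Injective γ ∧
    ∀ (v : V) (a b : C), pref v a b →
      dist (γ (Sum.inr v)) (γ (Sum.inl a)) < dist (γ (Sum.inr v)) (γ (Sum.inl b))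

theorem stmt_6 {C V : Type*} [Fintype C] [Fintype V]
    (pref : V → C → C → Prop) (hord : ∀ v : V, IsStrictTotalOrder C (pref v))
    (b c : C)
    (h1 : ∀ v : V, pref v b c)
    (h2 : ∀ (v : V) (d : C), d ≠ b → d ≠ c → ¬ (pref v b d ∧ pref v d c))
    (h3 : ∃ a : C, ∀ v : V, pref v a b) :
    IsEuclidean2 pref ↔
      IsEuclidean2 (fun (v : V) (x y : {d : C // d ≠ b}) => pref v x.1 y.1) := by
  obtain ⟨a, ha⟩ := h3
  constructor
  · rintro ⟨γ, hinj, hp⟩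
    exact ⟨fun q => γ (Sum.map Subtype.val id q),
      hinj.comp (Subtype.val_injective.sumMap Function.injective_id),
      fun v x y h => hp v x.1 y.1 h⟩
  · rintro ⟨γ, hinj, hp⟩
    classical
    by_cases hV : Nonempty V
    · obtain ⟨v0⟩ := hV
      haveI := hord v0
      have hbc : b ≠ c := by
        intro h; have := h1 v0; rw [h] at this; exact irrefl_of (pref v0) c this
      have hab : a ≠ b := by
        intro h; have := ha v0; rw [h] at this; exact irrefl_of (pref v0) b this
      have hac : a ≠ c := by
        intro h
        have hax : pref v0 a c := trans_of (pref v0) (ha v0) (h1 v0)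
        rw [h] at hax; exact irrefl_of (pref v0) c hax
      set cs : {d : C // d ≠ b} := ⟨c, hbc.symm⟩ with hcs
      set as : {d : C // d ≠ b} := ⟨a, hab⟩ with has
      set c' : Plane := γ (Sum.inl cs) with hc'
      set a' : Plane := γ (Sum.inl as) with ha'
      have hu : a' - c' ≠ 0 := by
        rw [sub_ne_zero]
        intro h
        have := hinj h
        simp only [Sum.inl.injEq, has, hcs, Subtype.mk.injEq] at this
        exact hac this
      set B : ℝ → Plane := fun t => c' + t • (a' - c') with hB
      -- convexity: for t ∈ (0,1), B t is strictly closer than c' to any w closer to a'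
      have conv : ∀ t ∈ Set.Ioo (0:ℝ) 1, ∀ w : Plane,
          dist w a' < dist w c' → dist w (B t) < dist w c' := by
        rintro t ⟨ht0, ht1⟩ w hw
        have key : w - B t = (1 - t) • (w - c') + t • (w - a') := by
          simp only [hB]
          module
        rw [dist_eq_norm, key]
        calc ‖(1 - t) • (w - c') + t • (w - a')‖
            ≤ ‖(1 - t) • (w - c')‖ + ‖t • (w - a')‖ := norm_add_le _ _
          _ = (1 - t) * ‖w - c'‖ + t * ‖w - a'‖ := by
              rw [norm_smul, norm_smul, Real.norm_eq_abs, Real.norm_eq_abs,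
                abs_of_pos (by linarith), abs_of_pos ht0]
          _ < (1 - t) * ‖w - c'‖ + t * ‖w - c'‖ := by
              have := hw
              rw [dist_eq_norm, dist_eq_norm] at this
              nlinarith
          _ = dist w c' := by rw [dist_eq_norm]; ring
      have hvac : ∀ v : V, dist (γ (Sum.inr v)) a' < dist (γ (Sum.inr v)) c' := by
        intro v
        haveI := hord v
        exact hp v as cs (trans_of (pref v) (ha v) (h1 v))
      -- B tends to c' as t → 0⁺
      have hBtend : Filter.Tendsto B (nhdsWithin 0 (Set.Ioi (0:ℝ))) (nhds c') := by
        have h0 : Filter.Tendsto B (nhds (0:ℝ)) (nhds (c' + (0:ℝ) • (a' - c'))) := by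
          exact (Filter.tendsto_id.smul_const (a' - c')).const_add c'
        rw [zero_smul, add_zero] at h0
        exact h0.mono_left nhdsWithin_le_nhds
      -- eventually conditions
      have hIoo : ∀ᶠ t in nhdsWithin 0 (Set.Ioi (0:ℝ)), t ∈ Set.Ioo (0:ℝ) 1 :=
        Ioo_mem_nhdsGT one_pos
      have hNe : ∀ᶠ t in nhdsWithin 0 (Set.Ioi (0:ℝ)),
          ∀ q : {d : C // d ≠ b} ⊕ V, B t ≠ γ q := by
        rw [Filter.eventually_all]
        intro q
        by_cases hq : γ q = c'
        · filter_upwards [self_mem_nhdsWithin] with t ht heq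
          rw [hq] at heq
          have : t • (a' - c') = 0 := by
            have := congrArg (fun x => x - c') heq
            simpa [hB] using this
          rcases smul_eq_zero.mp this with h | h
          · exact (Set.mem_Ioi.mp ht).ne' h
          · exact hu h
        · exact hBtend.eventually_ne (Ne.symm hq) |>.mono fun t ht => ht
      have hFar : ∀ᶠ t in nhdsWithin 0 (Set.Ioi (0:ℝ)),
          ∀ (v : V) (x : {d : C // d ≠ b}), pref v x.1 b →
            dist (γ (Sum.inr v)) (γ (Sum.inl x)) < dist (γ (Sum.inr v)) (B t) := by
        rw [Filter.eventually_all]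
        intro v
        rw [Filter.eventually_all]
        intro x
        by_cases hx : pref v x.1 b
        · haveI := hord v
          have hxc : pref v x.1 c := trans_of (pref v) hx (h1 v)
          have hlt : dist (γ (Sum.inr v)) (γ (Sum.inl x)) < dist (γ (Sum.inr v)) c' :=
            hp v x cs hxc
          have htd : Filter.Tendsto (fun t => dist (γ (Sum.inr v)) (B t))
              (nhdsWithin 0 (Set.Ioi (0:ℝ))) (nhds (dist (γ (Sum.inr v)) c')) :=
            Filter.Tendsto.dist tendsto_const_nhds hBtend
          filter_upwards [htd.eventually_const_lt hlt] with t ht _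
          exact ht
        · filter_upwards with t h
          exact absurd h hx
      obtain ⟨t, ⟨ht0, ht1⟩, hA, hC⟩ := (hIoo.and (hNe.and hFar)).exists
      refine ⟨Sum.elim (fun d => if h : d = b then B t else γ (Sum.inl ⟨d, h⟩))
        (fun v => γ (Sum.inr v)), ?_, ?_⟩
      · rintro (d1 | v1) (d2 | v2) heq <;> simp only [Sum.elim_inl, Sum.elim_inr] at heq
        · by_cases h1' : d1 = b <;> by_cases h2' : d2 = b
          · rw [h1', h2']
          · rw [dif_pos h1', dif_neg h2'] at heq
            exact absurd heq (hA _)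
          · rw [dif_neg h1', dif_pos h2'] at heq
            exact absurd heq.symm (hA _)
          · rw [dif_neg h1', dif_neg h2'] at heq
            have := hinj heq
            simp only [Sum.inl.injEq, Subtype.mk.injEq] at this
            rw [this]
        · by_cases h1' : d1 = b
          · rw [dif_pos h1'] at heq
            exact absurd heq (hA _)
          · rw [dif_neg h1'] at heq
            exact absurd (hinj heq) (by simp)
        · by_cases h2' : d2 = b
          · rw [dif_pos h2'] at heq
            exact absurd heq.symm (hA _)
          · rw [dif_neg h2'] at heq
            exact absurd (hinj heq) (by simp)
        · have := hinj heq
          simp only [Sum.inr.injEq] at this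
          rw [this]
      · intro v x y hxy
        haveI := hord v
        simp only [Sum.elim_inl, Sum.elim_inr]
        by_cases hyb : y = b
        · have hxb : x ≠ b := by
            intro h; rw [h, hyb] at hxy; exact irrefl_of (pref v) b hxy
          rw [dif_pos hyb, dif_neg hxb]
          exact hC v ⟨x, hxb⟩ (by rw [hyb] at hxy; exact hxy)
        · by_cases hxb : x = b
          · rw [dif_pos hxb, dif_neg hyb]
            have hby : pref v b y := by rw [hxb] at hxy; exact hxy
            have hBc : dist (γ (Sum.inr v)) (B t) < dist (γ (Sum.inr v)) c' :=
              conv t ⟨ht0, ht1⟩ _ (hvac v)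
            by_cases hyc : y = c
            · have he : (⟨y, hyb⟩ : {d : C // d ≠ b}) = cs := Subtype.ext hyc
              rw [he]
              exact hBc
            · have hcy : pref v c y := by
                have hnyc : ¬ pref v y c := fun h => h2 v y hyb hyc ⟨hby, h⟩
                rcases trichotomous_of (pref v) y c with h | h | h
                · exact absurd h hnyc
                · exact absurd h hyc
                · exact h
              have : dist (γ (Sum.inr v)) c' < dist (γ (Sum.inr v)) (γ (Sum.inl ⟨y, hyb⟩)) :=
                hp v cs ⟨y, hyb⟩ hcy
              exact lt_trans hBc this
          · rw [dif_neg hxb, dif_neg hyb]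
            exact hp v ⟨x, hxb⟩ ⟨y, hyb⟩ hxy
    · -- V is empty
      haveI : IsEmpty V := not_nonempty_iff.mp hV
      haveI : Infinite Plane := Infinite.of_injective
        (fun r : ℝ => r • (EuclideanSpace.single 0 1 : Plane))
        (smul_left_injective ℝ (by
          intro h
          have h0 := congrArg (fun x : Plane => x 0) h
          rw [EuclideanSpace.single_apply] at h0
          simp at h0))
      refine ⟨fun q => Infinite.natEmbedding Plane ((Fintype.equivFin (C ⊕ V)) q), ?_, ?_⟩
      · exact (Infinite.natEmbedding Plane).injective.comp
          (Fin.val_injective.comp (Fintype.equivFin (C ⊕ V)).injective)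
      · intro v; exact isEmptyElim v
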